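/- With V = H ⊕ 𝒱, θ : H → 𝒱 an isometric isomorphism (extended by zero), I = θᵗ - θ, and 𝒥 an orthogonal complex structure on V preserving H and 𝒱 and commuting with θ on H composed appropriately so that J := 𝒥⊕(-𝒥) anti-commutes with θ (Jθ = -θJ), the endomorphism K = IJ satisfies K² = -1, K = -JI, and (I, J, K) is a quaternionic triple of orthogonal complex structures on V. -/

import Mathlib

open LinearMap
open scoped RealInnerProductSpace

/-- With `V = H ⊕ 𝒱` an orthogonal splitting, `θ : H → 𝒱` an isometric isomorphism
(extended by zero on `𝒱`), `I = θᵗ - θ`, and `J` an orthogonal complex structure on `V`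
preserving `H` and `𝒱` and anti-commuting with `θ` (`Jθ = -θJ`), the endomorphism
`K = IJ` satisfies `K² = -1`, `K = -JI`, and `(I, J, K)` is a quaternionic triple of
orthogonal (anti-commuting) complex structures on `V`. -/
theorem stmt15 {V : Type*} [NormedAddCommGroup V] [InnerProductSpace ℝ V]
    [FiniteDimensional ℝ V]
    (H 𝒱 : Submodule ℝ V) (h𝒱 : 𝒱 = Hᗮ)
    (θ : V →ₗ[ℝ] V)
    (hθH : Submodule.map θ H = 𝒱)
    (hθiso : ∀ h ∈ H, ‖θ h‖ = ‖h‖)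
    (hθ𝒱 : ∀ v ∈ 𝒱, θ v = 0)
    (J : V →ₗ[ℝ] V)
    (hJ2 : J ∘ₗ J = -LinearMap.id)
    (hJiso : ∀ v : V, ‖J v‖ = ‖v‖)
    (hJH : ∀ h ∈ H, J h ∈ H)
    (hJ𝒱 : ∀ v ∈ 𝒱, J v ∈ 𝒱)
    (hJθ : J ∘ₗ θ = -(θ ∘ₗ J)) :
    let I : V →ₗ[ℝ] V := adjoint θ - θ
    let K : V →ₗ[ℝ] V := I ∘ₗ J
    (K ∘ₗ K = -LinearMap.id) ∧
    (K = -(J ∘ₗ I)) ∧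
    (I ∘ₗ I = -LinearMap.id) ∧
    (∀ v : V, ‖I v‖ = ‖v‖) ∧
    (∀ v : V, ‖K v‖ = ‖v‖) ∧
    (I ∘ₗ J = -(J ∘ₗ I)) ∧ (J ∘ₗ K = -(K ∘ₗ J)) ∧ (I ∘ₗ K = -(K ∘ₗ I)) := by
  intro I K
  -- decomposition of V
  have hsplit : ∀ v : V, ∃ a ∈ H, ∃ b ∈ 𝒱, v = a + b := by
    intro v
    obtain ⟨a, ha, b, hb, hab⟩ := H.exists_add_mem_mem_orthogonal v
    exact ⟨a, ha, b, by rwa [h𝒱], hab⟩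
  have horth : ∀ a ∈ H, ∀ b ∈ 𝒱, ⟪a, b⟫ = 0 := by
    intro a ha b hb
    rw [h𝒱] at hb
    exact (Submodule.mem_orthogonal H b).mp hb a ha
  -- θ maps into 𝒱
  have hθmem : ∀ v : V, θ v ∈ 𝒱 := by
    intro v
    obtain ⟨a, ha, b, hb, rfl⟩ := hsplit v
    rw [map_add, hθ𝒱 b hb, add_zero]
    rw [← hθH]
    exact Submodule.mem_map_of_mem ha
  -- θ∘θ = 0
  have hθθ : θ ∘ₗ θ = 0 := by
    ext v; exact hθ𝒱 _ (hθmem v)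
  -- inner preserving on H
  have hθinner : ∀ a ∈ H, ∀ b ∈ H, ⟪θ a, θ b⟫ = ⟪a, b⟫ := by
    intro a ha b hb
    rw [real_inner_eq_norm_add_mul_self_sub_norm_mul_self_sub_norm_mul_self_div_two,
        real_inner_eq_norm_add_mul_self_sub_norm_mul_self_sub_norm_mul_self_div_two a b,
        ← map_add, hθiso _ (H.add_mem ha hb), hθiso _ ha, hθiso _ hb]
  have hJinner : ∀ a b : V, ⟪J a, J b⟫ = ⟪a, b⟫ := by
    intro a b
    rw [real_inner_eq_norm_add_mul_self_sub_norm_mul_self_sub_norm_mul_self_div_two,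
        real_inner_eq_norm_add_mul_self_sub_norm_mul_self_sub_norm_mul_self_div_two a b,
        ← map_add, hJiso, hJiso, hJiso]
  have hJJ : ∀ v : V, J (J v) = -v := by
    intro v
    have := congrFun (congrArg DFunLike.coe hJ2) v
    simpa using this
  -- adjoint of J is -J
  have hJadj : adjoint J = -J := by
    ext x
    apply ext_inner_left ℝ
    intro y
    rw [adjoint_inner_right]
    have : ⟪J y, J (J x)⟫ = ⟪y, J x⟫ := hJinner y (J x)
    rw [hJJ x, inner_neg_right] at this
    simp only [LinearMap.neg_apply, inner_neg_right]
    linarith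
  -- adjoint θ kills H
  have hθadjH : ∀ a ∈ H, adjoint θ a = 0 := by
    intro a ha
    apply ext_inner_right ℝ
    intro y
    rw [adjoint_inner_left, inner_zero_left]
    exact horth a ha (θ y) (hθmem y)
  -- adjoint θ ∘ θ is identity on H
  have hadjθθ : ∀ a ∈ H, adjoint θ (θ a) = a := by
    intro a ha
    apply ext_inner_right ℝ
    intro y
    rw [adjoint_inner_left]
    obtain ⟨b, hb, c, hc, rfl⟩ := hsplit y
    rw [map_add, hθ𝒱 c hc, add_zero, inner_add_right, hθinner a ha b hb,
        horth a ha c hc, add_zero]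
  -- θ ∘ adjoint θ is identity on 𝒱
  have hθadjθ : ∀ b ∈ 𝒱, θ (adjoint θ b) = b := by
    intro b hb
    rw [← hθH] at hb
    obtain ⟨a, ha, rfl⟩ := hb
    rw [hadjθθ a ha]
  -- sum is identity
  have hsum : adjoint θ ∘ₗ θ + θ ∘ₗ adjoint θ = LinearMap.id := by
    ext v
    obtain ⟨a, ha, b, hb, rfl⟩ := hsplit v
    simp only [LinearMap.add_apply, comp_apply, id_apply, map_add]
    rw [hadjθθ a ha, hθ𝒱 b hb, map_zero, hθadjH a ha, map_zero,
        hθadjθ b hb]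
    abel
  -- adjoint θ ∘ adjoint θ = 0
  have hθθadj : adjoint θ ∘ₗ adjoint θ = 0 := by
    have := congrArg adjoint hθθ
    rwa [adjoint_comp, map_zero] at this
  -- I² = -1
  have hI2 : I ∘ₗ I = -LinearMap.id := by
    show (adjoint θ - θ) ∘ₗ (adjoint θ - θ) = -LinearMap.id
    rw [sub_comp, comp_sub, comp_sub, hθθadj, hθθ, ← hsum]
    abel
  -- adjoint θ anticommutes with J
  have hθadjJ : adjoint θ ∘ₗ J = -(J ∘ₗ adjoint θ) := by
    have := congrArg adjoint hJθ
    rw [adjoint_comp, map_neg, adjoint_comp, hJadj] at this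
    -- this : adjoint θ ∘ₗ -J = -(-J ∘ₗ adjoint θ)
    rw [comp_neg, neg_comp, neg_neg] at this
    linear_combination (norm := module) -this
  have hθJ : θ ∘ₗ J = -(J ∘ₗ θ) := by
    rw [hJθ]; module
  -- I anticommutes with J
  have hIJ : I ∘ₗ J = -(J ∘ₗ I) := by
    show (adjoint θ - θ) ∘ₗ J = -(J ∘ₗ (adjoint θ - θ))
    rw [sub_comp, comp_sub, hθadjJ, hθJ]
    module
  have hKJI : K = -(J ∘ₗ I) := hIJ
  have hJI : J ∘ₗ I = -(I ∘ₗ J) := by rw [hIJ, neg_neg]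
  have hI2' : I * I = -1 := hI2
  have hJ2' : J * J = -1 := hJ2
  have hJI' : J * I = -(I * J) := hJI
  -- K² = -1
  have hK2 : K ∘ₗ K = -LinearMap.id := by
    show (I * J) * (I * J) = -1
    have e1 : (I * J) * (I * J) = I * (J * I) * J := by noncomm_ring
    have e2 : I * -(I * J) * J = -((I * I) * (J * J)) := by noncomm_ring
    rw [e1, hJI', e2, hI2', hJ2']
    noncomm_ring
  -- I adjoint = -I
  have hIadj : adjoint I = -I := by
    show adjoint (adjoint θ - θ) = -(adjoint θ - θ)
    rw [map_sub, adjoint_adjoint]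
    abel
  have hIinner : ∀ v : V, ⟪I v, I v⟫ = ⟪v, v⟫ := by
    intro v
    rw [← adjoint_inner_left, hIadj]
    have : I (I v) = -v := by
      have := congrFun (congrArg DFunLike.coe hI2) v
      simpa using this
    simp [this]
  have hIiso : ∀ v : V, ‖I v‖ = ‖v‖ := by
    intro v
    have h1 := hIinner v
    rw [real_inner_self_eq_norm_sq, real_inner_self_eq_norm_sq] at h1
    exact (sq_eq_sq₀ (norm_nonneg _) (norm_nonneg _)).mp h1
  have hKiso : ∀ v : V, ‖K v‖ = ‖v‖ := by
    intro v
    show ‖I (J v)‖ = ‖v‖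
    rw [hIiso, hJiso]
  have hJK : J ∘ₗ K = -(K ∘ₗ J) := by
    show J * (I * J) = -((I * J) * J)
    rw [← mul_assoc, hJI', neg_mul]
  have hIK : I ∘ₗ K = -(K ∘ₗ I) := by
    show I * (I * J) = -((I * J) * I)
    have l1 : I * (I * J) = (-1) * J := by rw [← mul_assoc, hI2']
    have l2 : (I * J) * I = -((-1) * J) := by
      rw [mul_assoc, hJI', mul_neg, ← mul_assoc, hI2']
    rw [l1, l2, neg_neg]
  exact ⟨hK2, hKJI, hI2, hIiso, hKiso, hIJ, hJK, hIK⟩
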